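/- Let F be an atomless probability measure on ℝ supported in [q,Q] (0 ≤ q < Q), let ε ∈ (0,1), and let f(r) = r − (1/(1−ε)) ∫ max(r − c, 0) dF(c). If r* ∈ ℝ satisfies F((−∞, r*]) = 1 − ε, then f attains its global maximum over ℝ at r*, i.e., f(r) ≤ f(r*) for all r ∈ ℝ. -/

import Mathlib

open MeasureTheory

/-- Let `F` be an atomless probability measure supported in `[q, Q]` (with `0 ≤ q < Q`),
`ε ∈ (0,1)`, and `f r = r - (1/(1-ε)) * ∫ max (r - c) 0 ∂F`. If `F((-∞, r*]) = 1 - ε`,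
then `f` attains its global maximum over `ℝ` at `r*`. -/
theorem cvar_objective_max_at_quantile
    (q Q : ℝ) (hq : 0 ≤ q) (hqQ : q < Q)
    (F : Measure ℝ) [IsProbabilityMeasure F] [NullSingletonClass F]
    (hsupp : F (Set.Icc q Q)ᶜ = 0)
    (ε : ℝ) (hε : ε ∈ Set.Ioo (0 : ℝ) 1)
    (rstar : ℝ) (hquant : (F (Set.Iic rstar)).toReal = 1 - ε) :
    ∀ r : ℝ,
      r - (1 / (1 - ε)) * ∫ c, max (r - c) 0 ∂F ≤
        rstar - (1 / (1 - ε)) * ∫ c, max (rstar - c) 0 ∂F := by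
  intro r
  obtain ⟨hε0, hε1⟩ := hε
  have h1ε : (0:ℝ) < 1 - ε := by linarith
  have hae : ∀ᵐ c ∂F, c ∈ Set.Icc q Q := by
    rw [ae_iff]
    convert hsupp using 2; rfl
  have hint : ∀ s : ℝ, Integrable (fun c => max (s - c) 0) F := by
    intro s
    apply Integrable.mono' (integrable_const (|s - q|))
    · exact (Continuous.max (by continuity) continuous_const).aestronglyMeasurable
    · filter_upwards [hae] with c hc
      rw [Real.norm_eq_abs, abs_of_nonneg (le_max_right _ _)]
      have h1 : s - c ≤ s - q := by linarith [hc.1]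
      calc max (s - c) 0 ≤ max (s - q) 0 := max_le_max h1 le_rfl
        _ ≤ |s - q| := max_le (le_abs_self _) (abs_nonneg _)
  have hpt : ∀ c, Set.indicator (Set.Iic rstar) (fun _ => r - rstar) c ≤
      max (r - c) 0 - max (rstar - c) 0 := by
    intro c
    by_cases hc : c ∈ Set.Iic rstar
    · rw [Set.indicator_of_mem hc]
      have h2 : max (rstar - c) 0 = rstar - c := max_eq_left (by simp at hc; linarith)
      have h3 := le_max_left (r - c) (0:ℝ)
      simp at hc
      rw [h2]; linarith
    · rw [Set.indicator_of_notMem hc]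
      simp at hc
      have h1 : max (rstar - c) 0 = 0 := max_eq_right (by linarith)
      rw [h1]; simpa using le_max_right (r - c) (0:ℝ)
  have hind : Integrable (Set.indicator (Set.Iic rstar) (fun _ => r - rstar)) F :=
    (integrable_const _).indicator measurableSet_Iic
  have hmono := integral_mono hind ((hint r).sub (hint rstar)) hpt
  simp only [Pi.sub_apply] at hmono
  rw [integral_indicator_const _ measurableSet_Iic, integral_sub (hint r) (hint rstar)]
    at hmono
  rw [measureReal_def, hquant] at hmono
  have hkey : (1 - ε) * (r - rstar) ≤
      (∫ c, max (r - c) 0 ∂F) - ∫ c, max (rstar - c) 0 ∂F := by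
    simpa [smul_eq_mul] using hmono
  have hk : (0:ℝ) < 1 / (1 - ε) := by positivity
  have := mul_le_mul_of_nonneg_left hkey hk.le
  have hone : (1 / (1 - ε)) * ((1 - ε) * (r - rstar)) = r - rstar := by
    field_simp
  nlinarith [this]
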